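/- Let m : ℝ → ℝ be differentiable at σ_∞² with 0 < m'(σ_∞²) and θ := κ⁻¹·m'(σ_∞²) < 1, and suppose the lossy SE recursion σ²_{t+1} = σ_W² + κ⁻¹·m(σ²_t + P·D_t) with D_t/(σ²_t − σ_∞²) → 0 produces σ²_t → σ_∞² with σ²_t > σ_∞² for all t, where σ_∞² = σ_W² + κ⁻¹·m(σ_∞²). Then the excess ε_t := σ²_t − σ_∞² satisfies lim_{t→∞} ε_{t+1}/ε_t = θ. -/

import Mathlib

open Filter

/-- Geometric decay of the excess MSE: under the lossy state evolution recursion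
with relatively negligible distortion, the excess `ε_t = σ²_t − σ_∞²` satisfies
`ε_{t+1}/ε_t → θ = κ⁻¹ * m'(σ_∞²)`. -/
theorem excess_mse_geometric_decay
    (σW2 κ : ℝ) (hσW : 0 ≤ σW2) (hκ : 0 < κ) (P : ℕ)
    (m : ℝ → ℝ) (σinf2 m' : ℝ)
    (hderiv : HasDerivAt m m' σinf2) (hm'_pos : 0 < m')
    (θ : ℝ) (hθ_def : θ = κ⁻¹ * m') (hθ_lt : θ < 1)
    (hfix : σinf2 = σW2 + κ⁻¹ * m σinf2)
    (D : ℕ → ℝ) (hD_nonneg : ∀ t, 0 ≤ D t)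
    (σ : ℕ → ℝ)
    (hrec : ∀ t, σ (t + 1) = σW2 + κ⁻¹ * m (σ t + (P : ℝ) * D t))
    (hD_rel : Tendsto (fun t => D t / (σ t - σinf2)) atTop (nhds 0))
    (hσ_lim : Tendsto σ atTop (nhds σinf2))
    (hσ_gt : ∀ t, σinf2 < σ t) :
    Tendsto (fun t => (σ (t + 1) - σinf2) / (σ t - σinf2)) atTop (nhds θ) := by
  set x : ℕ → ℝ := fun t => σ t + (P : ℝ) * D t with hxdef
  have hε_pos : ∀ t, 0 < σ t - σinf2 := fun t => sub_pos.2 (hσ_gt t)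
  have hε_ne : ∀ t, σ t - σinf2 ≠ 0 := fun t => ne_of_gt (hε_pos t)
  have hx_gt : ∀ t, σinf2 < x t := fun t =>
    lt_of_lt_of_le (hσ_gt t) (le_add_of_nonneg_right (mul_nonneg (Nat.cast_nonneg P) (hD_nonneg t)))
  have hx_ne : ∀ t, x t ≠ σinf2 := fun t => ne_of_gt (hx_gt t)
  -- ε_t → 0
  have hε_lim : Tendsto (fun t => σ t - σinf2) atTop (nhds 0) := by
    have := hσ_lim.sub (tendsto_const_nhds (x := σinf2))
    simpa using this
  -- D_t → 0
  have hD_lim : Tendsto D atTop (nhds 0) := by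
    have h := hD_rel.mul hε_lim
    simp only [zero_mul] at h
    exact h.congr (fun t => div_mul_cancel₀ (D t) (hε_ne t))
  -- x_t → σinf2
  have hx_lim : Tendsto x atTop (nhds σinf2) := by
    have := hσ_lim.add (hD_lim.const_mul (P : ℝ))
    simpa using this
  -- slope limit
  have hslope : Tendsto (fun t => slope m σinf2 (x t)) atTop (nhds m') := by
    have h1 := hasDerivAt_iff_tendsto_slope.mp hderiv
    refine h1.comp ?_
    refine tendsto_nhdsWithin_iff.mpr ⟨hx_lim, Eventually.of_forall fun t => ?_⟩
    simpa using hx_ne t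
  -- ratio (x t − σinf2)/ε_t → 1
  have hratio : Tendsto (fun t => 1 + (P : ℝ) * (D t / (σ t - σinf2))) atTop (nhds 1) := by
    have := (tendsto_const_nhds (x := (1:ℝ))).add (hD_rel.const_mul (P : ℝ))
    simpa using this
  have hmain : Tendsto
      (fun t => κ⁻¹ * slope m σinf2 (x t) * (1 + (P : ℝ) * (D t / (σ t - σinf2))))
      atTop (nhds θ) := by
    have := ((hslope.const_mul κ⁻¹).mul hratio)
    simpa [hθ_def, mul_one] using this
  refine hmain.congr (fun t => ?_)
  have hrw : σ (t + 1) - σinf2 = κ⁻¹ * (m (x t) - m σinf2) := by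
    rw [hrec t]
    nth_rewrite 1 [hfix]
    ring
  have hxε : x t - σinf2 ≠ 0 := sub_ne_zero.2 (hx_ne t)
  have h1 : x t - σinf2 = (σ t - σinf2) + (P : ℝ) * D t := by
    simp only [hxdef]; ring
  have hne2 : (σ t - σinf2) + (P : ℝ) * D t ≠ 0 := h1 ▸ hxε
  have h3 : σ t * κ - σinf2 * κ ≠ 0 := by
    have := mul_ne_zero (hε_ne t) hκ.ne'
    intro h; exact this (by linarith)
  rw [hrw, slope_def_field, h1]
  field_simp [hε_ne t, hne2, hκ.ne', h3]
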